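/- Let ψ : Ω → ℝ be differentiable with L-Lipschitz gradient (ψ ∈ C^{1,1}(Ω)). Then there exists a constant C > 0 depending only on sup_Ω|∇ψ|, L and ζ such that for every cell K ∈ 𝒯: Σ_{σ∈Σ_K} ((ψ(x_L) − ψ(x_K))/d_σ)² m_σ d_{K,σ}/m_K ≤ |∇ψ(x_K)|² + C(h + η), where for σ = K|L ∈ Σ_K the cell L is the neighbor of K across σ. -/

import Mathlib

open scoped BigOperators ENNReal RealInnerProductSpace
open Finset MeasureTheory

namespace OTFV

noncomputable def Bact (p q : ℝ) : ℝ≥0∞ :=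
  if 0 < p then ENNReal.ofReal (q ^ 2 / (2 * p))
  else if p = 0 ∧ q = 0 then 0 else ⊤

structure Mesh (T E : Type*) where
  e1 : E → T
  e2 : E → T
  ne : ∀ σ, e1 σ ≠ e2 σ
  m : T → ℝ
  m_pos : ∀ K, 0 < m K
  mS : E → ℝ
  mS_pos : ∀ σ, 0 < mS σ
  dS : E → ℝ
  dS_pos : ∀ σ, 0 < dS σ
  d1 : E → ℝ
  d2 : E → ℝ
  d1_pos : ∀ σ, 0 < d1 σ
  d2_pos : ∀ σ, 0 < d2 σ
  d_sum : ∀ σ, d1 σ + d2 σ = dS σ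

variable {T T' E : Type*}

noncomputable def divT [Fintype E] [DecidableEq T] (M : Mesh T E) (F : E → ℝ) (K : T) : ℝ :=
  (∑ σ, ((if M.e1 σ = K then F σ else 0) + (if M.e2 σ = K then -F σ else 0)) * M.mS σ) / M.m K

noncomputable def gradS (M : Mesh T E) (a : T → ℝ) (σ : E) : ℝ :=
  (a (M.e2 σ) - a (M.e1 σ)) / M.dS σ

noncomputable def linRec (M : Mesh T E) (a : T → ℝ) (σ : E) : ℝ :=
  (M.d1 σ / M.dS σ) * a (M.e1 σ) + (M.d2 σ / M.dS σ) * a (M.e2 σ)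

def inj (p : T → T') (ρ : T' → ℝ) : T → ℝ := fun K => ρ (p K)

noncomputable def coarseM [Fintype T] [DecidableEq T'] (M : Mesh T E) (p : T → T') (K' : T') : ℝ :=
  ∑ K ∈ Finset.univ.filter (fun K => p K = K'), M.m K

noncomputable def Benergy [Fintype E] [Fintype T'] (M : Mesh T E) (p : T → T') (N : ℕ)
    (ρ : Fin (N+2) → T' → ℝ) (F : Fin (N+1) → E → ℝ) : ℝ≥0∞ :=
  if ∀ k K', 0 ≤ ρ k K' then
    ∑ k : Fin (N+1),
      ENNReal.ofReal ((1:ℝ)/(N+1)) *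
        ∑ σ, Bact (linRec M (inj p (fun K' => (ρ k.succ K' + ρ k.castSucc K') / 2)) σ) (F k σ) *
          ENNReal.ofReal (M.mS σ * M.dS σ)
  else ⊤

def ContEq [Fintype E] [DecidableEq T] (M : Mesh T E) (p : T → T') (N : ℕ)
    (ρ : Fin (N+2) → T' → ℝ) (F : Fin (N+1) → E → ℝ) : Prop :=
  ∀ (k : Fin (N+1)) (K : T),
    (ρ k.succ (p K) - ρ k.castSucc (p K)) / ((1:ℝ)/(N+1)) + divT M (F k) K = 0

def Cset [Fintype E] [DecidableEq T] (M : Mesh T E) (p : T → T') (N : ℕ)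
    (ρin ρf : T' → ℝ) : Set ((Fin (N+2) → T' → ℝ) × (Fin (N+1) → E → ℝ)) :=
  {x | x.1 0 = ρin ∧ x.1 (Fin.last (N+1)) = ρf ∧ ContEq M p N x.1 x.2}

noncomputable def Wdist2 [Fintype E] [Fintype T'] [DecidableEq T] (M : Mesh T E) (p : T → T')
    (N : ℕ) (ρin ρf : T' → ℝ) : ℝ≥0∞ :=
  2 * ⨅ (x : (Fin (N+2) → T' → ℝ) × (Fin (N+1) → E → ℝ)) (_ : x ∈ Cset M p N ρin ρf),
    Benergy M p N x.1 x.2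

/-- Euclidean space `ℝ^d`. -/
abbrev Vd (d : ℕ) := EuclideanSpace ℝ (Fin d)

/-- Geometric realization of an admissible TPFA mesh of the domain `Ω ⊂ ℝ^d`. -/
structure Geom (d : ℕ) (T E : Type*) (Ω : Set (Vd d)) extends Mesh T E where
  cell : T → Set (Vd d)
  cell_closed : ∀ K, IsClosed (cell K)
  cell_sub : ∀ K, cell K ⊆ Ω
  cell_cover : (⋃ K, cell K) = Ω
  cell_disj : ∀ K L : T, K ≠ L → interior (cell K) ∩ interior (cell L) = ∅
  cell_vol : ∀ K, volume (cell K) = ENNReal.ofReal (m K)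
  ctr : T → Vd d
  ctr_mem : ∀ K, ctr K ∈ Ω
  nrm : E → Vd d
  nrm_unit : ∀ σ, ‖nrm σ‖ = 1
  ctr_diff : ∀ σ, ctr (e2 σ) - ctr (e1 σ) = dS σ • nrm σ

/-- `d_{K,σ}` for a cell `K` incident to the edge `σ`. -/
noncomputable def sideD [DecidableEq T] (M : Mesh T E) (σ : E) (K : T) : ℝ :=
  if M.e1 σ = K then M.d1 σ else M.d2 σ

/-- Mesh regularity with constant `ζ`. -/
def Regular {d : ℕ} {Ω : Set (Vd d)} (G : Geom d T E Ω) (ζ : ℝ) : Prop :=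
  (∀ (σ : E) (K : T), (G.e1 σ = K ∨ G.e2 σ = K) →
    Metric.diam (G.cell K) ≤ ζ * G.dS σ ∧ ζ * G.dS σ ≤ ζ^2 * Metric.diam (G.cell K)) ∧
  ∀ K, Metric.infDist (G.ctr K) (G.cell K) ≤ ζ * Metric.diam (G.cell K)

/-- Asymptotic isotropy with constant `η`:
`Σ_{σ∈Σ_K} m_σ d_{K,σ} n_{K,σ} ⊗ n_{K,σ} ≤ m_K (1+η) Id` as quadratic forms. -/
def Isotropic [Fintype E] [DecidableEq T] {d : ℕ} {Ω : Set (Vd d)}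
    (G : Geom d T E Ω) (η : ℝ) : Prop :=
  ∀ (K : T) (v : Vd d),
    (∑ σ, if G.e1 σ = K ∨ G.e2 σ = K then
        G.mS σ * sideD G.toMesh σ K * (⟪G.nrm σ, v⟫ : ℝ)^2 else 0)
      ≤ G.m K * (1+η) * ‖v‖^2

/-- The maximal cell diameter `h`. -/
noncomputable def meshSize [Fintype T] [Nonempty T] {d : ℕ} {Ω : Set (Vd d)}
    (G : Geom d T E Ω) : ℝ :=
  Finset.univ.sup' Finset.univ_nonempty fun K => Metric.diam (G.cell K)

/-- The coarse cell `K'`, i.e. the union of the fine cells mapped to `K'`. -/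
def coarseCell {d : ℕ} {Ω : Set (Vd d)} (G : Geom d T E Ω) (p : T → T') (K' : T') :
    Set (Vd d) :=
  ⋃ (K : T) (_ : p K = K'), G.cell K

/-- Coarse sampling operator `Π_{𝒯'}` (cell averages). -/
noncomputable def samp [Fintype T] [DecidableEq T'] {d : ℕ} {Ω : Set (Vd d)}
    (G : Geom d T E Ω) (p : T → T') (f : Vd d → ℝ) (K' : T') : ℝ :=
  (∫ x in coarseCell G p K', f x) / coarseM G.toMesh p K'

/-- Discrete mean Poincaré inequality with constant `C_P`. -/
def DiscPoincare [Fintype T] [Fintype E] (M : Mesh T E) (CP : ℝ) : Prop :=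
  ∀ ψ : T → ℝ,
    Real.sqrt (∑ K, (ψ K - (∑ J, ψ J * M.m J) / (∑ J, M.m J))^2 * M.m K) ≤
      CP * Real.sqrt (∑ σ, (gradS M ψ σ)^2 * M.mS σ * M.dS σ)

/-- Squared weighted (by the reconstructed density `ρ`) norm of a time-dependent
edge function `G`, namely `‖G‖_ρ²`. -/
noncomputable def wnorm2 [Fintype E] (M : Mesh T E) (p : T → T') (N : ℕ)
    (ρ : Fin (N+2) → T' → ℝ) (u : Fin (N+1) → E → ℝ) : ℝ :=
  ((1:ℝ)/(N+1)) * ∑ k : Fin (N+1), ∑ σ,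
    (u k σ)^2 * linRec M (inj p (fun K' => (ρ k.succ K' + ρ k.castSucc K') / 2)) σ *
      M.mS σ * M.dS σ

end OTFV

open OTFV

section Aux
open scoped RealInnerProductSpace
open OTFV

lemma OTFV.lip_aux {d : ℕ} {Ω : Set (Vd d)} (hconv : Convex ℝ Ω)
    {ψ : Vd d → ℝ} {g : Vd d → Vd d} {S : ℝ}
    (hg : ∀ x ∈ Ω, HasGradientWithinAt ψ (g x) Ω x)
    (hS : ∀ x ∈ Ω, ‖g x‖ ≤ S)
    {x y : Vd d} (hx : x ∈ Ω) (hy : y ∈ Ω) :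
    |ψ y - ψ x| ≤ S * ‖y - x‖ := by
  have := hconv.norm_image_sub_le_of_norm_hasFDerivWithin_le
    (f' := fun z => (InnerProductSpace.toDual ℝ (Vd d)) (g z))
    (fun z hz => (hg z hz).hasFDerivWithinAt)
    (fun z hz => by simpa using hS z hz) hx hy
  simpa [Real.norm_eq_abs] using this

lemma OTFV.taylor_aux {d : ℕ} {Ω : Set (Vd d)} (hconv : Convex ℝ Ω)
    {ψ : Vd d → ℝ} {g : Vd d → Vd d}
    (hg : ∀ x ∈ Ω, HasGradientWithinAt ψ (g x) Ω x)
    {ℓ : NNReal} (hlip : LipschitzOnWith ℓ g Ω)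
    {x y : Vd d} (hx : x ∈ Ω) (hy : y ∈ Ω) :
    |ψ y - ψ x - ⟪g x, y - x⟫| ≤ ℓ * ‖y - x‖ ^ 2 := by
  set s := Ω ∩ Metric.closedBall x ‖y - x‖ with hs
  have hsc : Convex ℝ s := hconv.inter (convex_closedBall _ _)
  have hxs : x ∈ s := ⟨hx, by simp⟩
  have hys : y ∈ s := ⟨hy, by simp [Metric.mem_closedBall, dist_eq_norm]⟩
  have key := hsc.norm_image_sub_le_of_norm_hasFDerivWithin_le'
    (f := ψ) (f' := fun z => (InnerProductSpace.toDual ℝ (Vd d)) (g z))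
    (φ := (InnerProductSpace.toDual ℝ (Vd d)) (g x)) (C := ℓ * ‖y - x‖)
    (fun z hz => ((hg z hz.1).hasFDerivWithinAt).mono Set.inter_subset_left)
    (fun z hz => by
      rw [← map_sub, LinearIsometryEquiv.norm_map]
      calc ‖g z - g x‖ ≤ ℓ * ‖z - x‖ := by
              have := hlip.dist_le_mul z hz.1 x hx
              simpa [dist_eq_norm] using this
        _ ≤ ℓ * ‖y - x‖ := by
              have hz2 : dist z x ≤ ‖y - x‖ := hz.2
              rw [dist_eq_norm] at hz2
              exact mul_le_mul_of_nonneg_left hz2 ℓ.coe_nonneg)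
    hxs hys
  simpa [InnerProductSpace.toDual_apply_apply, Real.norm_eq_abs, sq, mul_assoc] using key

lemma OTFV.div_abs_helper {a b d t e : ℝ} (hd : 0 < d) (h : |b - a - d * t| ≤ e * d ^ 2) :
    |(b - a) / d - t| ≤ e * d := by
  have heq : (b - a) / d - t = (b - a - d * t) / d := by field_simp
  rw [heq, abs_div, abs_of_pos hd, div_le_iff₀ hd]
  nlinarith [h]
end Aux

set_option maxHeartbeats 2000000 in
theorem gradient_consistency (dim : ℕ) (S L ζ : ℝ) (hζ : 1 ≤ ζ) :
    ∃ C > 0,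
      ∀ (T E : Type) [Fintype T] [Fintype E] [DecidableEq T] [Nonempty T],
      ∀ (Ω : Set (Vd dim)), Convex ℝ Ω → IsCompact Ω →
      ∀ (G : Geom dim T E Ω) (η : ℝ), 0 ≤ η → Regular G ζ → Isotropic G η →
      ∀ (ψ : Vd dim → ℝ) (g : Vd dim → Vd dim),
        (∀ x ∈ Ω, HasGradientWithinAt ψ (g x) Ω x) →
        LipschitzOnWith (Real.toNNReal L) g Ω →
        (∀ x ∈ Ω, ‖g x‖ ≤ S) →
        ∀ K : T,
          (∑ σ, if G.e1 σ = K ∨ G.e2 σ = K then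
              (gradS G.toMesh (fun J => ψ (G.ctr J)) σ)^2 * G.mS σ * sideD G.toMesh σ K / G.m K
            else 0)
          ≤ ‖g (G.ctr K)‖^2 + C * (meshSize G + η) := by

  have hζ0 : (0:ℝ) ≤ ζ := le_trans zero_le_one hζ
  have hζpos : (0:ℝ) < ζ := lt_of_lt_of_le one_pos hζ
  set S₀ := max S 0 with hS₀def
  set ℓ₀ := max L 0 with hℓ₀def
  have hS₀0 : 0 ≤ S₀ := le_max_right _ _
  have hℓ₀0 : 0 ≤ ℓ₀ := le_max_right _ _
  set D : ℝ := (dim : ℝ) with hDdef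
  have hD0 : 0 ≤ D := Nat.cast_nonneg _
  have hCpos : 0 < S₀^2 * (2*D+1) + 4*S₀*ℓ₀*ζ*D + 1 := by
    have h1 : 0 ≤ S₀^2 * (2*D+1) := mul_nonneg (sq_nonneg _) (by linarith)
    have h2 : 0 ≤ 4*S₀*ℓ₀*ζ*D :=
      mul_nonneg (mul_nonneg (mul_nonneg (by linarith) hℓ₀0) hζ0) hD0
    linarith
  refine ⟨S₀^2 * (2*D+1) + 4*S₀*ℓ₀*ζ*D + 1, hCpos, ?_⟩
  intro T E _ _ _ _ Ω hconv _ G η hη hreg hiso ψ g hgrad hlipg hgS K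
  have hctrK : G.ctr K ∈ Ω := G.ctr_mem K
  set v := g (G.ctr K) with hvdef
  have hS' : ∀ x ∈ Ω, ‖g x‖ ≤ S₀ := fun x hx => (hgS x hx).trans (le_max_left _ _)
  have hvS : ‖v‖ ≤ S₀ := hS' _ hctrK
  have hv2 : ‖v‖^2 ≤ S₀^2 := by nlinarith [norm_nonneg v]
  have hlcoe : ((Real.toNNReal L : NNReal) : ℝ) = ℓ₀ := Real.coe_toNNReal' L
  set h := meshSize G with hhdef
  have hKh : Metric.diam (G.cell K) ≤ h := by
    rw [hhdef]; unfold OTFV.meshSize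
    exact Finset.le_sup' (fun J => Metric.diam (G.cell J)) (Finset.mem_univ K)
  have hh0 : 0 ≤ h := le_trans Metric.diam_nonneg hKh
  have hmK : 0 < G.m K := G.m_pos K
  have hsD : ∀ σ, 0 < sideD G.toMesh σ K := by
    intro σ; unfold OTFV.sideD; split
    · exact G.d1_pos σ
    · exact G.d2_pos σ
  -- dS is controlled by ζ * h
  have hdζ : ∀ σ, (G.e1 σ = K ∨ G.e2 σ = K) → G.dS σ ≤ ζ * h := by
    intro σ hinc
    have h2 := (hreg.1 σ K hinc).2
    have h3 : ζ * G.dS σ ≤ ζ * (ζ * Metric.diam (G.cell K)) := by nlinarith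
    have h4 : G.dS σ ≤ ζ * Metric.diam (G.cell K) := le_of_mul_le_mul_left h3 hζpos
    nlinarith
  have hnormE : ∀ σ, ‖G.ctr (G.e2 σ) - G.ctr (G.e1 σ)‖ = G.dS σ := by
    intro σ
    rw [G.ctr_diff σ, norm_smul, G.nrm_unit, Real.norm_eq_abs,
      abs_of_pos (G.dS_pos σ), mul_one]
  have hgradS_eq : ∀ σ, gradS G.toMesh (fun J => ψ (G.ctr J)) σ
      = (ψ (G.ctr (G.e2 σ)) - ψ (G.ctr (G.e1 σ))) / G.dS σ := fun σ => rfl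
  -- |gradS| ≤ S₀
  have habs : ∀ σ, |gradS G.toMesh (fun J => ψ (G.ctr J)) σ| ≤ S₀ := by
    intro σ
    have hd := G.dS_pos σ
    rw [hgradS_eq, abs_div, abs_of_pos hd, div_le_iff₀ hd]
    have := OTFV.lip_aux hconv hgrad hS' (G.ctr_mem (G.e1 σ)) (G.ctr_mem (G.e2 σ))
    rw [hnormE σ] at this
    linarith
  have hsq2 : ∀ σ, (gradS G.toMesh (fun J => ψ (G.ctr J)) σ)^2 ≤ S₀^2 := by
    intro σ
    have := abs_le.mp (habs σ)
    exact sq_le_sq' this.1 this.2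
  -- consistency: |gradS - ⟪n, v⟫| ≤ ℓ₀ dS
  have hclose : ∀ σ, (G.e1 σ = K ∨ G.e2 σ = K) →
      |gradS G.toMesh (fun J => ψ (G.ctr J)) σ - (⟪G.nrm σ, v⟫ : ℝ)| ≤ ℓ₀ * G.dS σ := by
    intro σ hinc
    have hd := G.dS_pos σ
    rw [hgradS_eq σ, real_inner_comm]
    rcases hinc with hK1 | hK2
    · have key := OTFV.taylor_aux hconv hgrad hlipg
        (G.ctr_mem (G.e1 σ)) (G.ctr_mem (G.e2 σ))
      rw [hnormE σ, hlcoe] at key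
      have hsub : G.ctr (G.e2 σ) - G.ctr (G.e1 σ) = G.dS σ • G.nrm σ := G.ctr_diff σ
      have hgx : g (G.ctr (G.e1 σ)) = v := by rw [hK1, ← hvdef]
      rw [hsub, real_inner_smul_right, hgx] at key
      exact OTFV.div_abs_helper hd key
    · have key := OTFV.taylor_aux hconv hgrad hlipg
        (G.ctr_mem (G.e2 σ)) (G.ctr_mem (G.e1 σ))
      rw [hlcoe] at key
      have hsub : G.ctr (G.e1 σ) - G.ctr (G.e2 σ) = -(G.dS σ • G.nrm σ) := by
        rw [← G.ctr_diff σ]; abel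
      have hnn : ‖G.ctr (G.e1 σ) - G.ctr (G.e2 σ)‖ = G.dS σ := by
        rw [hsub, norm_neg, norm_smul, G.nrm_unit, Real.norm_eq_abs, abs_of_pos hd, mul_one]
      have hgx : g (G.ctr (G.e2 σ)) = v := by rw [hK2, ← hvdef]
      rw [hnn, hsub, inner_neg_right, real_inner_smul_right, hgx] at key
      have key' : |ψ (G.ctr (G.e2 σ)) - ψ (G.ctr (G.e1 σ)) - G.dS σ * (⟪v, G.nrm σ⟫ : ℝ)|
          ≤ ℓ₀ * G.dS σ ^ 2 := by
        rw [← abs_neg]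
        convert key using 2
        ring
      exact OTFV.div_abs_helper hd key'
  -- squared per-edge bound
  have hsq : ∀ σ, (G.e1 σ = K ∨ G.e2 σ = K) →
      (gradS G.toMesh (fun J => ψ (G.ctr J)) σ)^2
        ≤ (⟪G.nrm σ, v⟫ : ℝ)^2 + 2*S₀*ℓ₀*(ζ*h) := by
    intro σ hinc
    set a := gradS G.toMesh (fun J => ψ (G.ctr J)) σ with ha
    set t := (⟪G.nrm σ, v⟫ : ℝ) with ht
    have h1 := hclose σ hinc
    have h2 := habs σ
    have h3 : |t| ≤ S₀ := by
      have := abs_real_inner_le_norm (G.nrm σ) v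
      rw [G.nrm_unit, one_mul] at this
      exact this.trans hvS
    have e1 : a^2 - t^2 ≤ |a - t| * |a + t| := by
      calc a^2 - t^2 = (a - t) * (a + t) := by ring
        _ ≤ |(a - t) * (a + t)| := le_abs_self _
        _ = |a - t| * |a + t| := abs_mul _ _
    have e2 : |a + t| ≤ 2 * S₀ := (abs_add_le a t).trans (by linarith)
    have e3 : |a - t| * |a + t| ≤ (ℓ₀ * G.dS σ) * (2 * S₀) :=
      mul_le_mul h1 e2 (abs_nonneg _) (mul_nonneg hℓ₀0 (G.dS_pos σ).le)
    have e4 : ℓ₀ * G.dS σ ≤ ℓ₀ * (ζ * h) := mul_le_mul_of_nonneg_left (hdζ σ hinc) hℓ₀0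
    have e5 : (ℓ₀ * G.dS σ) * (2 * S₀) ≤ (ℓ₀ * (ζ * h)) * (2 * S₀) :=
      mul_le_mul_of_nonneg_right e4 (by linarith)
    nlinarith [e1, e3, e5]
  -- total edge-weight bound from isotropy applied to a basis
  have hA : (∑ σ, if G.e1 σ = K ∨ G.e2 σ = K then G.mS σ * sideD G.toMesh σ K else 0)
      ≤ G.m K * (1+η) * D := by
    have hsum1 : ∀ σ, (∑ i : Fin dim, (⟪G.nrm σ, EuclideanSpace.single i (1:ℝ)⟫ : ℝ)^2) = 1 := by
      intro σ
      have hco : ∀ i : Fin dim, (⟪G.nrm σ, EuclideanSpace.single i (1:ℝ)⟫ : ℝ) = G.nrm σ i := by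
        intro i; rw [EuclideanSpace.inner_single_right]; simp
      have hn : (⟪G.nrm σ, G.nrm σ⟫ : ℝ) = 1 := by
        rw [real_inner_self_eq_norm_sq, G.nrm_unit]; norm_num
      calc (∑ i : Fin dim, (⟪G.nrm σ, EuclideanSpace.single i (1:ℝ)⟫ : ℝ)^2)
          = ∑ i : Fin dim, G.nrm σ i * G.nrm σ i := by
            refine Finset.sum_congr rfl fun i _ => ?_; rw [hco i]; ring
        _ = (⟪G.nrm σ, G.nrm σ⟫ : ℝ) := by
            rw [PiLp.inner_apply]; simp [RCLike.inner_apply]; exact Finset.sum_congr rfl fun _ _ => by ring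
        _ = 1 := hn
    have step : ∀ σ, (if G.e1 σ = K ∨ G.e2 σ = K then G.mS σ * sideD G.toMesh σ K else 0)
        = ∑ i : Fin dim, (if G.e1 σ = K ∨ G.e2 σ = K then
            G.mS σ * sideD G.toMesh σ K * (⟪G.nrm σ, EuclideanSpace.single i (1:ℝ)⟫ : ℝ)^2
          else 0) := by
      intro σ
      by_cases hP : G.e1 σ = K ∨ G.e2 σ = K
      · simp only [hP, if_true]
        rw [← Finset.mul_sum, hsum1 σ, mul_one]
      · simp [hP]
    calc (∑ σ, if G.e1 σ = K ∨ G.e2 σ = K then G.mS σ * sideD G.toMesh σ K else 0)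
        = ∑ σ, ∑ i : Fin dim, (if G.e1 σ = K ∨ G.e2 σ = K then
            G.mS σ * sideD G.toMesh σ K * (⟪G.nrm σ, EuclideanSpace.single i (1:ℝ)⟫ : ℝ)^2
          else 0) := Finset.sum_congr rfl fun σ _ => step σ
      _ = ∑ i : Fin dim, ∑ σ, (if G.e1 σ = K ∨ G.e2 σ = K then
            G.mS σ * sideD G.toMesh σ K * (⟪G.nrm σ, EuclideanSpace.single i (1:ℝ)⟫ : ℝ)^2
          else 0) := Finset.sum_comm
      _ ≤ ∑ i : Fin dim, G.m K * (1+η) * ‖EuclideanSpace.single i (1:ℝ)‖^2 :=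
          Finset.sum_le_sum fun i _ => hiso K _
      _ = G.m K * (1+η) * D := by
          simp only [EuclideanSpace.norm_single, norm_one, one_pow, mul_one,
            Finset.sum_const, Finset.card_univ, Fintype.card_fin, nsmul_eq_mul, hDdef]
          ring
  set B1 := ∑ σ, (if G.e1 σ = K ∨ G.e2 σ = K then
      (gradS G.toMesh (fun J => ψ (G.ctr J)) σ)^2 * G.mS σ * sideD G.toMesh σ K else 0)
    with hB1
  have hLHS : (∑ σ, if G.e1 σ = K ∨ G.e2 σ = K then
      (gradS G.toMesh (fun J => ψ (G.ctr J)) σ)^2 * G.mS σ * sideD G.toMesh σ K / G.m K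
    else 0) = B1 / G.m K := by
    rw [hB1, Finset.sum_div]
    refine Finset.sum_congr rfl fun σ _ => ?_
    split_ifs
    · rfl
    · rw [zero_div]
  rw [hLHS]
  rcases le_or_gt η 1 with hη1 | hη1
  · -- small anisotropy
    have h2Sl : 0 ≤ 2*S₀*ℓ₀*(ζ*h) :=
      mul_nonneg (mul_nonneg (by linarith) hℓ₀0) (mul_nonneg hζ0 hh0)
    have hB1le : B1 ≤ G.m K * (1+η) * ‖v‖^2 + (2*S₀*ℓ₀*(ζ*h)) * (G.m K * (1+η) * D) := by
      have stp : B1 ≤ (∑ σ, if G.e1 σ = K ∨ G.e2 σ = K then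
            G.mS σ * sideD G.toMesh σ K * (⟪G.nrm σ, v⟫ : ℝ)^2 else 0)
          + (2*S₀*ℓ₀*(ζ*h)) * (∑ σ, if G.e1 σ = K ∨ G.e2 σ = K then
            G.mS σ * sideD G.toMesh σ K else 0) := by
        rw [hB1, Finset.mul_sum, ← Finset.sum_add_distrib]
        refine Finset.sum_le_sum fun σ _ => ?_
        by_cases hP : G.e1 σ = K ∨ G.e2 σ = K
        · simp only [hP, if_true]
          have h1 := hsq σ hP
          have h2 : 0 ≤ G.mS σ * sideD G.toMesh σ K :=
            le_of_lt (mul_pos (G.mS_pos σ) (hsD σ))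
          nlinarith [h1, h2]
        · simp [hP]
      refine stp.trans (add_le_add (hiso K v) (mul_le_mul_of_nonneg_left hA h2Sl))
    rw [div_le_iff₀ hmK]
    have hgoal : G.m K * (1+η) * ‖v‖^2 + (2*S₀*ℓ₀*(ζ*h)) * (G.m K * (1+η) * D)
        ≤ (‖v‖^2 + (S₀^2 * (2*D+1) + 4*S₀*ℓ₀*ζ*D + 1) * (h + η)) * G.m K := by
      have hsc : (1+η) * ‖v‖^2 + (2*S₀*ℓ₀*(ζ*h)) * ((1+η) * D)
          ≤ ‖v‖^2 + (S₀^2 * (2*D+1) + 4*S₀*ℓ₀*ζ*D + 1) * (h + η) := by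
        nlinarith [mul_nonneg hη (sub_nonneg.2 hv2),
          mul_nonneg (mul_nonneg (mul_nonneg (mul_nonneg hS₀0 hℓ₀0) hζ0) hD0)
            (mul_nonneg hh0 (sub_nonneg.2 hη1)),
          mul_nonneg hη (mul_nonneg (sq_nonneg S₀) hD0),
          mul_nonneg hh0 (mul_nonneg (sq_nonneg S₀) hD0),
          mul_nonneg hh0 (sq_nonneg S₀),
          mul_nonneg hη (mul_nonneg (mul_nonneg (mul_nonneg hS₀0 hℓ₀0) hζ0) hD0)]
      nlinarith [mul_le_mul_of_nonneg_right hsc hmK.le]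
    calc B1 ≤ _ := hB1le
      _ ≤ _ := hgoal
  · -- large anisotropy
    have hB1le : B1 ≤ S₀^2 * (G.m K * (1+η) * D) := by
      have stp : B1 ≤ S₀^2 * (∑ σ, if G.e1 σ = K ∨ G.e2 σ = K then
          G.mS σ * sideD G.toMesh σ K else 0) := by
        rw [hB1, Finset.mul_sum]
        refine Finset.sum_le_sum fun σ _ => ?_
        by_cases hP : G.e1 σ = K ∨ G.e2 σ = K
        · simp only [hP, if_true]
          have h2 : 0 ≤ G.mS σ * sideD G.toMesh σ K :=
            le_of_lt (mul_pos (G.mS_pos σ) (hsD σ))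
          nlinarith [hsq2 σ, h2]
        · simp [hP]
      exact stp.trans (mul_le_mul_of_nonneg_left hA (sq_nonneg _))
    rw [div_le_iff₀ hmK]
    have hsc : S₀^2 * ((1+η) * D) ≤ ‖v‖^2 + (S₀^2 * (2*D+1) + 4*S₀*ℓ₀*ζ*D + 1) * (h + η) := by
      nlinarith [sq_nonneg (‖v‖), mul_nonneg (mul_nonneg (sq_nonneg S₀) hD0) (by linarith : (0:ℝ) ≤ η - 1),
        mul_nonneg hh0 hCpos.le,
        mul_nonneg (by linarith : (0:ℝ) ≤ η) (mul_nonneg (mul_nonneg (mul_nonneg (by linarith : (0:ℝ) ≤ 4*S₀) hℓ₀0) hζ0) hD0),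
        (by linarith : (0:ℝ) ≤ η), sq_nonneg S₀]
    nlinarith [hB1le, mul_le_mul_of_nonneg_right hsc hmK.le]
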